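/- For 1 ≤ i ≤ n and k ≥ 1, let Cov(k,i) = {w·w' ∈ Σ_n^* : Δ(w)(i) < 0 and every proper prefix u of w satisfies 0 ≤ Δ(u)(i) ≤ k}. Let L_{neg,i} be the linear set with base vector −e_i and period set {e_j, −e_j : 1 ≤ j ≤ n, j ≠ i}, and let Z be the linear set with base vector 0 and period set {e_j, −e_j : 1 ≤ j ≤ n}. Then (1) Cov(k,i) ⊆ K^k(L_{neg,i})·K^k(Z); (2) L_{neg,i} ⊕⁺ Z = ∅, so K^k(L_{neg,i})·K^k(Z) ∈ R_2; and (3) K^k(L_{neg,i})·K^k(Z) is disjoint from the coverability Dyck language D_n^↑. -/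

import Mathlib

set_option linter.unusedVariables false

/-! ### Alphabet, effects, Dyck languages -/

abbrev Sig (n : ℕ) := Fin n × Bool

def letterEff {n : ℕ} (a : Sig n) : Fin n → ℤ :=
  fun j => if j = a.1 then (if a.2 then 1 else -1) else 0

def wordEff {n : ℕ} (w : List (Sig n)) : Fin n → ℤ :=
  (w.map letterEff).sum

/-- The Dyck language `D_n`. -/
def Dyck (n : ℕ) : Language (Sig n) :=
  {w | wordEff w = 0 ∧ ∀ u, u <+: w → ∀ j, 0 ≤ wordEff u j}

/-- The coverability Dyck language `D_n^↑`. -/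
def CovDyck (n : ℕ) : Language (Sig n) :=
  {w | ∀ u, u <+: w → ∀ j, 0 ≤ wordEff u j}

/-- The `ℤ`-Dyck language `D_n^ℤ`. -/
def ZDyck (n : ℕ) : Language (Sig n) :=
  {w | wordEff w = 0}

/-! ### VASS -/

structure VASS (A : Type) where
  Q : Type
  C : Type
  finQ : Finite Q
  finC : Finite C
  E : Set (Q × Option A × (C → ℤ) × Q)
  finE : E.Finite

inductive VASS.NRun {A : Type} (V : VASS A) :
    (V.Q × (V.C → ℕ)) → List A → (V.Q × (V.C → ℕ)) → Prop
  | refl (cfg : V.Q × (V.C → ℕ)) : VASS.NRun V cfg [] cfg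
  | step {q : V.Q} {c : V.C → ℕ} {a : Option A} {d : V.C → ℤ} {q' : V.Q}
      {c' : V.C → ℕ} {w : List A} {last : V.Q × (V.C → ℕ)} :
      (q, a, d, q') ∈ V.E →
      (∀ j, (c' j : ℤ) = (c j : ℤ) + d j) →
      VASS.NRun V (q', c') w last →
      VASS.NRun V (q, c) (a.toList ++ w) last

/-- An initialized VASS: generalized initial/final configurations,
with `none` playing the role of `ω`. -/
structure InitVASS (A : Type) extends VASS A where
  qin : Q
  qout : Q
  cin : C → Option ℕ
  cout : C → Option ℕ

/-- The reachability language of an initialized VASS. -/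
def InitVASS.lang {A : Type} (V : InitVASS A) : Language A :=
  {w | ∃ c0 cl : V.C → ℕ,
      V.toVASS.NRun (V.qin, c0) w (V.qout, cl) ∧
      (∀ j m, V.cin j = some m → c0 j = m) ∧
      (∀ j m, V.cout j = some m → cl j = m)}

/-! ### Transducers -/

structure Transducer (G A : Type) where
  Q : Type
  finQ : Finite Q
  start : Q
  accept : Set Q
  trans : Set (Q × (Option G × Option A) × Q)
  finT : trans.Finite

inductive Transducer.Path {G A : Type} (T : Transducer G A) :
    T.Q → List G → List A → T.Q → Prop
  | refl (q : T.Q) : Transducer.Path T q [] [] q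
  | step {q q' qf : T.Q} {g : Option G} {a : Option A} {u : List G} {v : List A} :
      (q, (g, a), q') ∈ T.trans →
      Transducer.Path T q' u v qf →
      Transducer.Path T q (g.toList ++ u) (a.toList ++ v) qf

/-- The relation recognized by a transducer. -/
def Transducer.rel {G A : Type} (T : Transducer G A) (u : List G) (v : List A) : Prop :=
  ∃ qf ∈ T.accept, T.Path T.start u v qf

/-- `T⁻¹(L)`. -/
def Transducer.invImage {G A : Type} (T : Transducer G A) (L : Language A) : Language G :=
  {u | ∃ v ∈ L, T.rel u v}

/-! ### Regular separability -/

def RegSep {A : Type} (L1 L2 : Language A) : Prop :=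
  ∃ R : Language A, R.IsRegular ∧ L1 ≤ R ∧ ∀ w ∈ R, w ∉ L2

/-! ### Linear sets and regular approximations -/

structure LinSet (n : ℕ) where
  base : Fin n → ℤ
  periods : Set (Fin n → ℤ)
  finP : periods.Finite

def LinSet.toSet {n : ℕ} (L : LinSet n) : Set (Fin n → ℤ) :=
  {x | ∃ p ∈ AddSubmonoid.closure L.periods, x = L.base + p}

def inBox {n : ℕ} (k : ℕ) (x : Fin n → ℤ) : Prop :=
  ∀ j, -(k : ℤ) ≤ x j ∧ x j ≤ (k : ℤ)

/-- Reachability in the ε-NFA underlying the `k`-th regular approximation of `L`: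
states are vectors in `[-k,k]^n`, letters move by their effect, ε-transitions
subtract a period. -/
inductive KReach {n : ℕ} (L : LinSet n) (k : ℕ) :
    (Fin n → ℤ) → List (Sig n) → (Fin n → ℤ) → Prop
  | refl (x : Fin n → ℤ) (h : inBox k x) : KReach L k x [] x
  | letter {x y : Fin n → ℤ} {w : List (Sig n)} (a : Sig n)
      (h : inBox k x) (h' : inBox k (x + letterEff a)) :
      KReach L k (x + letterEff a) w y → KReach L k x (a :: w) y
  | eps {x y : Fin n → ℤ} {w : List (Sig n)} {p : Fin n → ℤ}
      (hp : p ∈ L.periods) (h : inBox k x) (h' : inBox k (x - p)) :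
      KReach L k (x - p) w y → KReach L k x w y

/-- The `k`-th regular approximation `K^k(L)`. -/
def KApprox {n : ℕ} (L : LinSet n) (k : ℕ) : Language (Sig n) :=
  {w | ∃ y, KReach L k 0 w y ∧ y ∈ L.toSet}

/-! ### The `⊕⁺` operation and the families `R_ℓ` -/

def posPlus {n : ℕ} (K L : Set (Fin n → ℤ)) : Set (Fin n → ℤ) :=
  {x | (∀ j, 0 ≤ x j) ∧ ∃ a ∈ K, (∀ j, 0 ≤ a j) ∧ ∃ b ∈ L, x = a + b}

def posFoldAux {n : ℕ} : Set (Fin n → ℤ) → List (Set (Fin n → ℤ)) → Set (Fin n → ℤ)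
  | S, [] => S
  | S, L :: Ls => posFoldAux (posPlus S L) Ls

/-- `posFold [L₁, …, L_ℓ] = L₁ ⊕⁺ ⋯ ⊕⁺ L_ℓ` (associated to the left); for `ℓ = 1`
it is `L₁` itself. -/
def posFold {n : ℕ} : List (Set (Fin n → ℤ)) → Set (Fin n → ℤ)
  | [] => ∅
  | L :: Ls => posFoldAux L Ls

/-- The family `R_ℓ`. -/
def RFam (n ℓ : ℕ) : Set (Language (Sig n)) :=
  {K | ∃ (k : ℕ) (Ls : List (LinSet n)), Ls.length = ℓ ∧
      (0 : Fin n → ℤ) ∉ posFold (Ls.map LinSet.toSet) ∧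
      K = (Ls.map (fun L => KApprox L k)).prod}

/-- `R_{≤ m} = ⋃_{1 ≤ i ≤ m} R_i`. -/
def RleFam (n m : ℕ) : Set (Language (Sig n)) :=
  ⋃ i ∈ Set.Icc 1 m, RFam n i

/-- `R = ⋃_{ℓ ≥ 1} R_ℓ`. -/
def RAll (n : ℕ) : Set (Language (Sig n)) :=
  ⋃ i ∈ Set.Ici 1, RFam n i

/-! ### Basic separator sets -/

def IsBasicSepSet {n : ℕ} (S : Language (Sig n)) (B : Set (Language (Sig n))) : Prop :=
  (∀ K ∈ B, K.IsRegular ∧ ∀ w ∈ K, w ∉ S) ∧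
  (∀ L : Language (Sig n), L.IsRegular → (∀ w ∈ L, w ∉ S) →
    ∃ F ⊆ B, F.Finite ∧ ∀ w ∈ L, ∃ K ∈ F, w ∈ K)

/-! Extra defs for specific statements -/

/-- `u ∼_A v`: the words induce the same state transformation in the DFA `M`. -/
def simEq {α σ : Type} (M : DFA α σ) (u v : List α) : Prop :=
  ∀ p : σ, M.evalFrom p u = M.evalFrom p v

/-- Assemble `w₀ m₁ w₁ ⋯ m_k w_k` over `Σ ⊎ Σ#` (`Sum.inl` = plain, `Sum.inr` = marked). -/
def assemble {α : Type} : List (List α) → List α → List (α ⊕ α)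
  | [], _ => []
  | w :: _, [] => w.map Sum.inl
  | w :: ws, m :: ms => w.map Sum.inl ++ Sum.inr m :: assemble ws ms

/-- The set of effects of a language. -/
def effSet {n : ℕ} (L : Language (Sig n)) : Set (Fin n → ℤ) :=
  {v | ∃ w ∈ L, wordEff w = v}

/-- `Mod(μ, v)`. -/
def ModLang (n μ : ℕ) (v : Fin n → ℤ) : Language (Sig n) :=
  {w | ∀ j, wordEff w j ≡ v j [ZMOD (μ : ℤ)]}

/-- `ModSet(μ, v)`: base `v`, periods `{±μ·e_i}`. -/
def ModSet (n μ : ℕ) (v : Fin n → ℤ) : LinSet n where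
  base := v
  periods := (Set.range fun i : Fin n => (μ : ℤ) • Pi.single i (1 : ℤ)) ∪
    (Set.range fun i : Fin n => -((μ : ℤ) • Pi.single i (1 : ℤ)))
  finP := (Set.finite_range _).union (Set.finite_range _)

/-- `Cov(k, i)`. -/
def CovLang (n k : ℕ) (i : Fin n) : Language (Sig n) :=
  {x | ∃ w w', x = w ++ w' ∧ wordEff w i < 0 ∧
      ∀ u, u <+: w → u ≠ w → 0 ≤ wordEff u i ∧ wordEff u i ≤ (k : ℤ)}

/-- `L_{neg,i}`: base `-e_i`, periods `{±e_j : j ≠ i}`. -/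
def LNeg (n : ℕ) (i : Fin n) : LinSet n where
  base := -Pi.single i 1
  periods := ((fun j : Fin n => Pi.single j (1 : ℤ)) '' {j | j ≠ i}) ∪
    ((fun j : Fin n => -Pi.single j (1 : ℤ)) '' {j | j ≠ i})
  finP := ((Set.toFinite _).image _).union ((Set.toFinite _).image _)

/-- `Z`: base `0`, periods `{±e_j}`. -/
def ZSet (n : ℕ) : LinSet n where
  base := 0
  periods := (Set.range fun j : Fin n => Pi.single j (1 : ℤ)) ∪
    (Set.range fun j : Fin n => -Pi.single j (1 : ℤ))
  finP := (Set.finite_range _).union (Set.finite_range _)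

/-! The language `C_ℓ` over `Σ₂` -/

def ltrA1 : Sig 2 := (0, true)
def ltrA2 : Sig 2 := (1, true)
def ltrB1 : Sig 2 := (0, false)
def ltrB2 : Sig 2 := (1, false)

def fwdWord (j : ℕ) : List (Sig 2) := ltrA1 :: List.replicate j ltrA2
def bwdWord (j : ℕ) : List (Sig 2) := ltrB1 :: List.replicate j ltrB2

def segLang (j : ℕ) : Language (Sig 2) :=
  KStar.kstar ({fwdWord j, bwdWord j} : Language (Sig 2))

def aPlusLang : Language (Sig 2) :=
  {w | ∃ m : ℕ, 0 < m ∧ w = List.replicate m ltrA1}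

def CLang (ℓ : ℕ) : Language (Sig 2) :=
  aPlusLang * ((List.range ℓ).map (fun j => segLang (j + 1))).prod



/-! ### Auxiliary lemmas for stmt13 -/

lemma wordEff_nil {n : ℕ} : wordEff ([] : List (Sig n)) = 0 := rfl

lemma wordEff_cons {n : ℕ} (a : Sig n) (w : List (Sig n)) :
    wordEff (a :: w) = letterEff a + wordEff w := by
  simp [wordEff]

lemma wordEff_append {n : ℕ} (u v : List (Sig n)) :
    wordEff (u ++ v) = wordEff u + wordEff v := by
  simp [wordEff]

lemma letterEff_abs {n : ℕ} (a : Sig n) (j : Fin n) :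
    letterEff a j = 1 ∨ letterEff a j = -1 ∨ letterEff a j = 0 := by
  unfold letterEff
  split
  · split
    · exact Or.inl rfl
    · exact Or.inr (Or.inl rfl)
  · exact Or.inr (Or.inr rfl)

lemma letterEff_eq {n : ℕ} (a : Sig n) :
    letterEff a = if a.2 then Pi.single a.1 (1:ℤ) else -Pi.single a.1 (1:ℤ) := by
  rcases a with ⟨i0, b⟩
  funext j
  cases b <;> simp [letterEff, Pi.single_apply] <;> split <;> simp

lemma lneg_period_apply {n : ℕ} {i : Fin n} {p : Fin n → ℤ}
    (hp : p ∈ (LNeg n i).periods) : p i = 0 := by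
  rcases hp with ⟨j, hj, rfl⟩ | ⟨j, hj, rfl⟩ <;>
    simp [Pi.single_eq_of_ne (Ne.symm hj)]

lemma lneg_closure_apply {n : ℕ} {i : Fin n} {p : Fin n → ℤ}
    (hp : p ∈ AddSubmonoid.closure (LNeg n i).periods) : p i = 0 := by
  have hle : AddSubmonoid.closure (LNeg n i).periods ≤
      AddMonoidHom.mker (Pi.evalAddMonoidHom (fun _ : Fin n => ℤ) i) := by
    rw [AddSubmonoid.closure_le]
    intro x hx
    simpa [AddMonoidHom.mem_mker] using lneg_period_apply hx
  simpa [AddMonoidHom.mem_mker] using hle hp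

lemma lneg_toSet_apply {n : ℕ} {i : Fin n} {y : Fin n → ℤ}
    (hy : y ∈ (LNeg n i).toSet) : y i = -1 := by
  obtain ⟨p, hp, rfl⟩ := hy
  simp [LNeg, lneg_closure_apply hp]

lemma single_neg_mem_lneg {n : ℕ} (i : Fin n) :
    Pi.single i (-1 : ℤ) ∈ (LNeg n i).toSet := by
  refine ⟨0, AddSubmonoid.zero_mem _, ?_⟩
  funext j
  by_cases h : j = i <;> simp [LNeg, h, Pi.single_apply]

lemma inBox_single {n : ℕ} {k : ℕ} {i : Fin n} {c : ℤ}
    (h1 : -(k:ℤ) ≤ c) (h2 : c ≤ k) : inBox k (Pi.single i c) := by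
  intro j
  rw [Pi.single_apply]
  split
  · exact ⟨h1, h2⟩
  · constructor <;> omega

lemma inBox_single_add {n : ℕ} {k : ℕ} (hk : 1 ≤ k) {i : Fin n} {c : ℤ}
    (h1 : -(k:ℤ) ≤ c) (h2 : c ≤ k) (a : Sig n) (ha : a.1 ≠ i) :
    inBox k (Pi.single i c + letterEff a) := by
  intro j
  have h := letterEff_abs a j
  have h0 : j = i → letterEff a j = 0 := by
    intro hj; simp [letterEff, hj, Ne.symm ha]
  simp only [Pi.add_apply, Pi.single_apply]
  by_cases hj : j = i
  · rw [if_pos hj, h0 hj]; constructor <;> omega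
  · rw [if_neg hj]; rcases h with h|h|h <;> rw [h] <;> constructor <;> omega

lemma letterEff_mem_lneg {n : ℕ} {i : Fin n} (a : Sig n) (ha : a.1 ≠ i) :
    letterEff a ∈ (LNeg n i).periods := by
  rw [letterEff_eq]
  cases hb : a.2
  · simp only [Bool.false_eq_true, if_false]
    exact Or.inr ⟨a.1, ha, rfl⟩
  · simp only [if_true]
    exact Or.inl ⟨a.1, ha, rfl⟩

lemma letterEff_mem_zset {n : ℕ} (a : Sig n) :
    letterEff a ∈ (ZSet n).periods := by
  rw [letterEff_eq]
  cases hb : a.2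
  · simp only [Bool.false_eq_true, if_false]
    exact Or.inr ⟨a.1, rfl⟩
  · simp only [if_true]
    exact Or.inl ⟨a.1, rfl⟩

lemma lneg_kreach {n : ℕ} {i : Fin n} {k : ℕ} (hk : 1 ≤ k) :
    ∀ (w : List (Sig n)) (c : ℤ),
      (∀ u, u <+: w → -(k:ℤ) ≤ c + wordEff u i ∧ c + wordEff u i ≤ k) →
      KReach (LNeg n i) k (Pi.single i c) w (Pi.single i (c + wordEff w i)) := by
  intro w
  induction w with
  | nil =>
    intro c h
    have h0 := h [] List.nil_prefix
    rw [wordEff_nil] at h0 ⊢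
    simp only [Pi.zero_apply, add_zero] at h0 ⊢
    exact KReach.refl _ (inBox_single h0.1 h0.2)
  | cons a w ih =>
    intro c h
    have h0 := h [] List.nil_prefix
    rw [wordEff_nil] at h0
    simp only [Pi.zero_apply, add_zero] at h0
    have hpc : ∀ u, u <+: w → (a :: u) <+: (a :: w) := by
      rintro u ⟨t, rfl⟩
      exact ⟨t, rfl⟩
    by_cases ha : a.1 = i
    · set d : ℤ := if a.2 then 1 else -1 with hd
      have hla : letterEff a i = d := by simp [letterEff, ha, hd]
      have hsum : Pi.single i c + letterEff a = Pi.single i (c + d) := by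
        funext j
        by_cases hj : j = i
        · subst hj; simp [Pi.single_apply, letterEff, ha, hd]
        · simp [Pi.single_apply, hj, letterEff, ha]
      have h1 := h [a] ⟨w, rfl⟩
      have hwa : wordEff [a] i = d := by
        show (letterEff a + 0) i = d
        simp [hla]
      rw [hwa] at h1
      have key : ∀ u, u <+: w →
          -(k:ℤ) ≤ (c + d) + wordEff u i ∧ (c + d) + wordEff u i ≤ k := by
        intro u hu
        have h2 := h (a :: u) (hpc u hu)
        rw [wordEff_cons] at h2
        simp only [Pi.add_apply, hla] at h2
        constructor <;> linarith [h2.1, h2.2]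
      have hend : c + wordEff (a :: w) i = (c + d) + wordEff w i := by
        rw [wordEff_cons]; simp only [Pi.add_apply, hla]; ring
      rw [hend]
      exact KReach.letter a (inBox_single h0.1 h0.2)
        (by rw [hsum]; exact inBox_single h1.1 h1.2)
        (by rw [hsum]; exact ih (c + d) key)
    · have hla : letterEff a i = 0 := by simp [letterEff, Ne.symm ha]
      have key : ∀ u, u <+: w →
          -(k:ℤ) ≤ c + wordEff u i ∧ c + wordEff u i ≤ k := by
        intro u hu
        have h2 := h (a :: u) (hpc u hu)
        rw [wordEff_cons] at h2
        simpa only [Pi.add_apply, hla, zero_add] using h2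
      have hend : c + wordEff (a :: w) i = c + wordEff w i := by
        rw [wordEff_cons]; simp only [Pi.add_apply, hla]; ring
      rw [hend]
      refine KReach.letter a (inBox_single h0.1 h0.2)
        (inBox_single_add hk h0.1 h0.2 a ha) ?_
      refine KReach.eps (letterEff_mem_lneg a ha)
        (inBox_single_add hk h0.1 h0.2 a ha) ?_ ?_
      · rw [add_sub_cancel_right]; exact inBox_single h0.1 h0.2
      · rw [add_sub_cancel_right]; exact ih c key

lemma zset_kreach {n : ℕ} {k : ℕ} (hk : 1 ≤ k) (w : List (Sig n)) :
    KReach (ZSet n) k 0 w 0 := by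
  have hbox0 : inBox k (0 : Fin n → ℤ) := by
    intro j; simp only [Pi.zero_apply]; constructor <;> omega
  induction w with
  | nil => exact KReach.refl 0 hbox0
  | cons a w ih =>
    have hboxa : inBox k ((0 : Fin n → ℤ) + letterEff a) := by
      intro j
      simp only [Pi.add_apply, Pi.zero_apply, zero_add]
      rcases letterEff_abs a j with h|h|h <;> rw [h] <;> constructor <;> omega
    refine KReach.letter a hbox0 hboxa ?_
    refine KReach.eps (letterEff_mem_zset a) hboxa ?_ ?_
    · rw [add_sub_cancel_right]; exact hbox0
    · rw [add_sub_cancel_right]; exact ih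

lemma lneg_kreach_eff {n : ℕ} {i : Fin n} {k : ℕ} {x y : Fin n → ℤ}
    {w : List (Sig n)} (h : KReach (LNeg n i) k x w y) :
    y i = x i + wordEff w i := by
  induction h with
  | refl x hx => rw [wordEff_nil]; simp
  | letter a hb hb' h ih =>
    rw [wordEff_cons]
    simp only [Pi.add_apply] at ih ⊢
    linarith [ih]
  | eps hp hb hb' h ih =>
    have hp0 := lneg_period_apply hp
    simp only [Pi.sub_apply, hp0, sub_zero] at ih
    exact ih

lemma covlang_last {n : ℕ} {i : Fin n} {k : ℕ} {w : List (Sig n)}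
    (hneg : wordEff w i < 0)
    (hpre : ∀ u, u <+: w → u ≠ w → 0 ≤ wordEff u i ∧ wordEff u i ≤ (k:ℤ)) :
    wordEff w i = -1 := by
  rcases List.eq_nil_or_concat w with rfl | ⟨w0, a, rfl⟩
  · rw [wordEff_nil] at hneg; simp at hneg
  · simp only [List.concat_eq_append] at hneg hpre ⊢
    have h0 := hpre w0 ⟨[a], rfl⟩
      (fun h => by simpa using congrArg List.length h)
    rw [wordEff_append] at hneg ⊢
    have habs := letterEff_abs a i
    have hwa : wordEff [a] i = letterEff a i := by
      show (letterEff a + 0) i = letterEff a i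
      simp
    simp only [Pi.add_apply, hwa] at hneg ⊢
    rcases habs with h|h|h <;> omega

theorem stmt13 (n : ℕ) (hn : 1 ≤ n) (i : Fin n) (k : ℕ) (hk : 1 ≤ k) :
    (CovLang n k i ≤ KApprox (LNeg n i) k * KApprox (ZSet n) k) ∧
    (posPlus (LNeg n i).toSet (ZSet n).toSet = ∅ ∧
      KApprox (LNeg n i) k * KApprox (ZSet n) k ∈ RFam n 2) ∧
    (∀ w ∈ KApprox (LNeg n i) k * KApprox (ZSet n) k, w ∉ CovDyck n) := by
  refine ⟨?_, ⟨?_, ?_⟩, ?_⟩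
  · -- Part 1: Cov(k,i) ⊆ K^k(LNeg) · K^k(Z)
    intro x hx
    obtain ⟨w, w', rfl, hneg, hpre⟩ := hx
    have hw1 : wordEff w i = -1 := covlang_last hneg hpre
    refine Language.mem_mul.mpr ⟨w, ?_, w', ?_, rfl⟩
    · have hK : KReach (LNeg n i) k (Pi.single i (0:ℤ)) w
          (Pi.single i (0 + wordEff w i)) := by
        refine lneg_kreach hk w 0 ?_
        intro u hu
        by_cases huw : u = w
        · subst huw; rw [hw1]; constructor <;> omega
        · have := hpre u hu huw; constructor <;> omega
      rw [Pi.single_zero, zero_add, hw1] at hK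
      exact ⟨Pi.single i (-1), hK, single_neg_mem_lneg i⟩
    · exact ⟨0, zset_kreach hk w',
        ⟨0, AddSubmonoid.zero_mem _, by simp [ZSet]⟩⟩
  · -- Part 2a: posPlus is empty
    ext x
    simp only [posPlus, Set.mem_setOf_eq, Set.mem_empty_iff_false, iff_false]
    rintro ⟨hx, a, ha, hanneg, -⟩
    have h1 := lneg_toSet_apply ha
    have h2 := hanneg i
    omega
  · -- Part 2b: membership in RFam n 2
    refine ⟨k, [LNeg n i, ZSet n], rfl, ?_, ?_⟩
    · intro h0
      simp only [List.map, posFold, posFoldAux] at h0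
      obtain ⟨-, a, ha, hanneg, -⟩ := h0
      have h1 := lneg_toSet_apply ha
      have h2 := hanneg i
      omega
    · simp
  · -- Part 3: disjoint from CovDyck
    rintro w hw hcov
    obtain ⟨u, hu, v, hv, rfl⟩ := Language.mem_mul.mp hw
    obtain ⟨y, hy, hyL⟩ := hu
    have h1 : y i = wordEff u i := by simpa using lneg_kreach_eff hy
    have h2 : y i = -1 := lneg_toSet_apply hyL
    have h3 := hcov u ⟨v, rfl⟩ i
    omega
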